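/- Let E be a compact Polish space and S a Polish space, and let Φ be a map from Borel probability measures on E to Borel probability measures on S that is continuous with respect to the weak topologies and injective. Then for any sequences {μ_n}, {ν_n} of Borel probability measures on E, ‖Φ(μ_n) − Φ(ν_n)‖_TV → 0 as n → ∞ implies ‖μ_n − ν_n‖_BL → 0 as n → ∞. -/

import Mathlib

open MeasureTheory Filter TopologicalSpace BoundedContinuousFunction Set
open scoped NNReal ENNReal Topology

section helpers

variable {X : Type*} [TopologicalSpace X] [NormalSpace X]

/-- Urysohn for `ℝ≥0`-valued bounded continuous functions. -/
lemma exists_bcnn_zero_one {s t : Set X} (hs : IsClosed s) (ht : IsClosed t)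
    (hd : Disjoint s t) :
    ∃ g : X →ᵇ ℝ≥0, (∀ x ∈ s, g x = 0) ∧ (∀ x ∈ t, g x = 1) ∧ (∀ x, g x ≤ 1) := by
  obtain ⟨G, hG0, hG1, hG01⟩ := exists_continuous_zero_one_of_isClosed hs ht hd
  refine ⟨⟨⟨fun x => Real.toNNReal (G x), continuous_real_toNNReal.comp G.continuous⟩,
      ⟨1, fun x y => ?_⟩⟩, fun x hx => ?_, fun x hx => ?_, fun x => ?_⟩
  · have h1 := hG01 x
    have h2 := hG01 y
    rw [NNReal.dist_eq]
    have e1 : (Real.toNNReal (G x) : ℝ) = G x := Real.coe_toNNReal _ h1.1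
    have e2 : (Real.toNNReal (G y) : ℝ) = G y := Real.coe_toNNReal _ h2.1
    rw [e1, e2, abs_sub_le_iff]
    constructor <;> nlinarith [h1.1, h1.2, h2.1, h2.2]
  · show Real.toNNReal (G x) = 0
    have : G x = 0 := hG0 hx
    simp [this]
  · show Real.toNNReal (G x) = 1
    have : G x = 1 := hG1 hx
    simp [this]
  · show Real.toNNReal (G x) ≤ 1
    have := (hG01 x).2
    exact Real.toNNReal_le_one.mpr this

end helpers

section compactness

variable {E : Type*} [MetricSpace E] [CompactSpace E] [SeparableSpace E]
  [MeasurableSpace E] [BorelSpace E]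

lemma stmt12_exists_tendsto_subseq (ρ : ℕ → ProbabilityMeasure E) :
    ∃ (a : ProbabilityMeasure E) (φ : ℕ → ℕ), StrictMono φ ∧
      Tendsto (fun n => ρ (φ n)) atTop (𝓝 a) := by
  -- a countable dense family of test functions
  haveI : SeparableSpace (E →ᵇ ℝ≥0) :=
    (ContinuousMap.isometryEquivBoundedOfCompact E ℝ≥0).toHomeomorph.isQuotientMap.separableSpace
  obtain ⟨Dset, Dcnt, Ddense⟩ := exists_countable_dense (E →ᵇ ℝ≥0)
  obtain ⟨F, hF⟩ := Set.Countable.exists_eq_range Dcnt (Ddense.nonempty)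
  -- uniform bounds for each test function
  have hbound : ∀ f : E →ᵇ ℝ≥0, ∃ M : ℝ≥0, ∀ x, f x ≤ M := by
    intro f
    rcases isEmpty_or_nonempty E with hE | hE
    · exact ⟨0, fun x => (IsEmpty.false x).elim⟩
    obtain ⟨M, hM⟩ := (isCompact_range f.continuous).bddAbove
    exact ⟨M, fun x => hM ⟨x, rfl⟩⟩
  choose B hB using hbound
  have htest_le : ∀ (m : ProbabilityMeasure E) (f : E →ᵇ ℝ≥0),
      m.toFiniteMeasure.testAgainstNN f ≤ B f := by
    intro m f
    calc m.toFiniteMeasure.testAgainstNN f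
        ≤ m.toFiniteMeasure.testAgainstNN (BoundedContinuousFunction.const E (B f)) :=
          FiniteMeasure.testAgainstNN_mono _ (fun x => by simpa using hB f x)
      _ = B f := by
          rw [FiniteMeasure.testAgainstNN_const, m.mass_toFiniteMeasure, mul_one]
  -- diagonal-type extraction via compactness of a product of intervals
  have hpi : IsCompact (Set.univ.pi fun k : ℕ => Set.Icc (0 : ℝ≥0) (B (F k))) :=
    isCompact_univ_pi fun k => isCompact_Icc
  obtain ⟨y, -, φ, hφ, hconv⟩ := hpi.tendsto_subseq
    (x := fun n (k : ℕ) => (ρ n).toFiniteMeasure.testAgainstNN (F k))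
    (fun n => Set.mem_univ_pi.mpr fun k => ⟨zero_le, htest_le _ _⟩)
  have hconvk : ∀ k, Tendsto (fun n => (ρ (φ n)).toFiniteMeasure.testAgainstNN (F k))
      atTop (𝓝 (y k)) := by
    intro k
    exact (tendsto_pi_nhds.mp hconv k)
  -- the limit functional on all test functions, via a Cauchy-sequence argument
  have hcauchy : ∀ f : E →ᵇ ℝ≥0,
      ∃ L : ℝ≥0, Tendsto (fun n => (ρ (φ n)).toFiniteMeasure.testAgainstNN f) atTop (𝓝 L) := by
    intro f
    apply cauchySeq_tendsto_of_complete
    rw [Metric.cauchySeq_iff]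
    intro ε hε
    obtain ⟨g, hgD, hfg⟩ := Metric.mem_closure_iff.mp (Ddense f) (ε/5) (by positivity)
    rw [hF] at hgD
    obtain ⟨k, rfl⟩ := hgD
    have hv : CauchySeq (fun n => (ρ (φ n)).toFiniteMeasure.testAgainstNN (F k)) :=
      (hconvk k).cauchySeq
    obtain ⟨N, hN⟩ := Metric.cauchySeq_iff.mp hv (ε/5) (by positivity)
    refine ⟨N, fun m hm n hn => ?_⟩
    have lip : ∀ j, dist ((ρ (φ j)).toFiniteMeasure.testAgainstNN f)
        ((ρ (φ j)).toFiniteMeasure.testAgainstNN (F k)) ≤ dist f (F k) := by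
      intro j
      simpa using ((ρ (φ j)).testAgainstNN_lipschitz.dist_le_mul f (F k))
    calc dist ((ρ (φ m)).toFiniteMeasure.testAgainstNN f)
          ((ρ (φ n)).toFiniteMeasure.testAgainstNN f)
        ≤ dist ((ρ (φ m)).toFiniteMeasure.testAgainstNN f)
            ((ρ (φ m)).toFiniteMeasure.testAgainstNN (F k))
          + dist ((ρ (φ m)).toFiniteMeasure.testAgainstNN (F k))
            ((ρ (φ n)).toFiniteMeasure.testAgainstNN (F k))
          + dist ((ρ (φ n)).toFiniteMeasure.testAgainstNN (F k))
            ((ρ (φ n)).toFiniteMeasure.testAgainstNN f) := dist_triangle4 _ _ _ _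
      _ < ε/5 + ε/5 + ε/5 := by
          refine add_lt_add (add_lt_add_of_le_of_lt (lt_of_le_of_lt (lip m) hfg).le ?_) ?_
          · exact hN m hm n hn
          · rw [dist_comm]
            exact lt_of_le_of_lt (lip n) hfg
      _ < ε := by linarith
  choose ℓ hℓ using hcauchy
  -- the limit functional is linear
  have hone : ℓ 1 = 1 := by
    refine tendsto_nhds_unique (hℓ 1) ?_
    have : (fun n => (ρ (φ n)).toFiniteMeasure.testAgainstNN 1) = fun _ => 1 := by
      funext n
      rw [FiniteMeasure.testAgainstNN_one, (ρ (φ n)).mass_toFiniteMeasure]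
    rw [this]
    exact tendsto_const_nhds
  have hmono : ∀ f g : E →ᵇ ℝ≥0, (∀ x, f x ≤ g x) → ℓ f ≤ ℓ g := by
    intro f g h
    exact le_of_tendsto_of_tendsto' (hℓ f) (hℓ g)
      (fun n => FiniteMeasure.testAgainstNN_mono _ h)
  let Λ : (E →ᵇ ℝ≥0) →ₗ[ℝ≥0] ℝ≥0 :=
    { toFun := ℓ
      map_add' := fun f g => by
        refine tendsto_nhds_unique (hℓ (f + g)) ?_
        have : (fun n => (ρ (φ n)).toFiniteMeasure.testAgainstNN (f + g))
            = fun n => (ρ (φ n)).toFiniteMeasure.testAgainstNN f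
              + (ρ (φ n)).toFiniteMeasure.testAgainstNN g := by
          funext n; exact FiniteMeasure.testAgainstNN_add _ f g
        rw [this]
        exact (hℓ f).add (hℓ g)
      map_smul' := fun c f => by
        refine tendsto_nhds_unique (hℓ (c • f)) ?_
        have : (fun n => (ρ (φ n)).toFiniteMeasure.testAgainstNN (c • f))
            = fun n => c • (ρ (φ n)).toFiniteMeasure.testAgainstNN f := by
          funext n; exact FiniteMeasure.testAgainstNN_smul _ c f
        rw [this]
        simpa [smul_eq_mul] using (hℓ f).const_mul c }
  have hΛ : ∀ f, Λ f = ℓ f := fun _ => rfl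
  -- the content associated with the limit functional
  let Λc : CompactlySupportedContinuousMap E ℝ≥0 →ₗ[ℝ≥0] ℝ≥0 :=
    { toFun := fun f => Λ f.toBoundedContinuousFunction
      map_add' := fun f g => by
        show Λ (f + g).toBoundedContinuousFunction
          = Λ f.toBoundedContinuousFunction + Λ g.toBoundedContinuousFunction
        rw [← map_add]; congr 1
      map_smul' := fun c f => by
        show Λ (c • f).toBoundedContinuousFunction = c • Λ f.toBoundedContinuousFunction
        rw [← map_smul]; congr 1 }
  let C : Content E :=
    { toFun := rieszContentAux Λc
      mono' := fun K₁ K₂ h => rieszContentAux_mono Λc h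
      sup_le' := rieszContentAux_sup_le Λc
      sup_disjoint' := by
        intro K₁ K₂ hd hc₁ hc₂
        exact rieszContentAux_union Λc hd }
  -- the limit measure
  have hCopen : ∀ (U : Set E) (hU : IsOpen U),
      C.measure U = C.innerContent ⟨U, hU⟩ := by
    intro U hU
    rw [C.measure_apply hU.measurableSet, C.outerMeasure_of_isOpen U hU]
  have hCuniv : rieszContentAux Λc ⟨Set.univ, isCompact_univ⟩ = 1 := by
    refine le_antisymm ?_ ?_
    · have := rieszContentAux_le Λc (K := ⟨Set.univ, isCompact_univ⟩)
        (f := CompactlySupportedContinuousMap.continuousMapEquiv (1 : C(E, ℝ≥0)))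
        (fun x _ => by simp)
      calc rieszContentAux Λc ⟨Set.univ, isCompact_univ⟩
          ≤ Λc (CompactlySupportedContinuousMap.continuousMapEquiv (1 : C(E, ℝ≥0))) := this
        _ = Λ 1 := by
          show Λ _ = Λ 1
          congr 1
        _ = 1 := hone
    · refine le_csInf (rieszContentAux_image_nonempty Λc _) ?_
      rintro b ⟨f, hf, rfl⟩
      calc (1:ℝ≥0) = ℓ 1 := hone.symm
        _ ≤ ℓ f.toBoundedContinuousFunction := hmono _ _ (fun x => by simpa using hf x trivial)
  have hprob : IsProbabilityMeasure C.measure := by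
    constructor
    rw [hCopen Set.univ isOpen_univ]
    refine le_antisymm ?_ ?_
    · refine iSup₂_le fun K hK => ?_
      calc (C K : ℝ≥0∞) ≤ (C ⟨Set.univ, isCompact_univ⟩ : ℝ≥0∞) := by
            exact_mod_cast C.mono K ⟨Set.univ, isCompact_univ⟩ (Set.subset_univ _)
        _ = 1 := by
            show ((rieszContentAux Λc ⟨Set.univ, isCompact_univ⟩ : ℝ≥0) : ℝ≥0∞) = 1
            rw [hCuniv]; rfl
    · refine le_trans ?_ (le_iSup₂ (f := fun (K : Compacts E) (_ : (K : Set E) ⊆ (⟨Set.univ, isOpen_univ⟩ : Opens E)) => (C K : ℝ≥0∞)) ⟨Set.univ, isCompact_univ⟩ (Set.subset_univ _))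
      show (1:ℝ≥0∞) ≤ ((rieszContentAux Λc ⟨Set.univ, isCompact_univ⟩ : ℝ≥0) : ℝ≥0∞)
      rw [hCuniv]
      simp
  let a : ProbabilityMeasure E := ⟨C.measure, hprob⟩
  refine ⟨a, φ, hφ, ?_⟩
  -- weak convergence via portmanteau (liminf condition for open sets)
  apply MeasureTheory.tendsto_of_forall_isOpen_le_liminf
  intro U hU
  set L : ℝ≥0 := atTop.liminf fun i => (ρ (φ i)) U with hL
  -- reduce to the content of compact subsets
  have key : ∀ (K : Compacts E), (K : Set E) ⊆ U → (C.toFun K : ℝ≥0) ≤ L := by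
    intro K hKU
    obtain ⟨g, hg0, hg1, hgle⟩ := exists_bcnn_zero_one (isClosed_compl_iff.mpr hU)
      K.isCompact.isClosed (by
        rw [Set.disjoint_left]
        intro x hx hxK
        exact hx (hKU hxK))
    have hlg : C.toFun K ≤ ℓ g := rieszContentAux_le Λc
      (f := CompactlySupportedContinuousMap.continuousMapEquiv g.toContinuousMap)
      (fun x hx => (hg1 x hx).ge)
    have hgU : ∀ j, (ρ (φ j)).toFiniteMeasure.testAgainstNN g ≤ (ρ (φ j)) U := by
      intro j
      rw [← ENNReal.coe_le_coe, FiniteMeasure.testAgainstNN_coe_eq,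
        ProbabilityMeasure.ennreal_coeFn_eq_coeFn_toMeasure]
      calc ∫⁻ x, (g x : ℝ≥0∞) ∂((ρ (φ j)) : Measure E)
          ≤ ∫⁻ x, U.indicator (fun _ => (1:ℝ≥0∞)) x ∂((ρ (φ j)) : Measure E) := by
            refine lintegral_mono fun x => ?_
            by_cases hx : x ∈ U
            · rw [Set.indicator_of_mem hx]
              simpa using ENNReal.coe_le_coe.mpr (hgle x)
            · rw [Set.indicator_of_notMem hx]
              have : g x = 0 := hg0 x hx
              simp [this]
        _ = ((ρ (φ j)) : Measure E) U := lintegral_indicator_one hU.measurableSet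
    have hb : IsBoundedUnder (· ≤ ·) atTop
        (fun j => (ρ (φ j)).toFiniteMeasure.testAgainstNN g) := (hℓ g).isBoundedUnder_le
    have hlim : ℓ g ≤ L := by
      have h1 : ℓ g = atTop.liminf (fun j => (ρ (φ j)).toFiniteMeasure.testAgainstNN g) :=
        ((hℓ g).liminf_eq).symm
      rw [h1, hL]
      exact liminf_le_liminf (Eventually.of_forall hgU)
        (hv := (isBoundedUnder_of ⟨1, fun j => (ρ (φ j)).apply_le_one U⟩).isCoboundedUnder_ge)
    exact le_trans hlg hlim
  -- conclude
  have hUmeas : (a U : ℝ≥0∞) = C.measure U := ProbabilityMeasure.ennreal_coeFn_eq_coeFn_toMeasure a U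
  have : C.measure U ≤ (L : ℝ≥0∞) := by
    rw [hCopen U hU]
    refine iSup₂_le fun K hK => ?_
    exact ENNReal.coe_le_coe.mpr (key K hK)
  have h2 := hUmeas ▸ this
  exact ENNReal.coe_le_coe.mp h2

end compactness
section suphelpers

lemma stmt12_real_iSup_mem_le {α : Type*} {cls : Set α} {v : α → ℝ} {c : ℝ} (hc : 0 ≤ c)
    (h : ∀ f ∈ cls, v f ≤ c) : ⨆ f ∈ cls, v f ≤ c :=
  Real.iSup_le (fun f => Real.iSup_le (fun hf => h f hf) hc) hc

lemma stmt12_real_le_iSup_mem {α : Type*} {cls : Set α} {v : α → ℝ} {c : ℝ}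
    (hb : ∀ f ∈ cls, v f ≤ c) {f : α} (hf : f ∈ cls) : v f ≤ ⨆ g ∈ cls, v g := by
  have hbdd : BddAbove (Set.range fun g => ⨆ _ : g ∈ cls, v g) := by
    refine ⟨max c 0, ?_⟩
    rintro _ ⟨g, rfl⟩
    exact Real.iSup_le (fun hg => le_max_of_le_left (hb g hg)) (le_max_right _ _)
  calc v f = ⨆ _ : f ∈ cls, v f := (ciSup_pos (f := fun _ => v f) hf).symm
    _ ≤ ⨆ g ∈ cls, v g := le_ciSup hbdd f

lemma stmt12_integral_diff_le_two {Ω : Type*} [MeasurableSpace Ω] (P Q : Measure Ω)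
    [IsProbabilityMeasure P] [IsProbabilityMeasure Q] {f : Ω → ℝ} (hf : ∀ x, |f x| ≤ 1) :
    |∫ x, f x ∂P - ∫ x, f x ∂Q| ≤ 2 := by
  have h1 : |∫ x, f x ∂P| ≤ 1 := by
    have := norm_integral_le_of_norm_le_const (μ := P) (C := 1) (f := f)
      (Eventually.of_forall fun x => by rw [Real.norm_eq_abs]; exact hf x)
    simpa [measure_univ, Real.norm_eq_abs] using this
  have h2 : |∫ x, f x ∂Q| ≤ 1 := by
    have := norm_integral_le_of_norm_le_const (μ := Q) (C := 1) (f := f)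
      (Eventually.of_forall fun x => by rw [Real.norm_eq_abs]; exact hf x)
    simpa [measure_univ, Real.norm_eq_abs] using this
  calc |∫ x, f x ∂P - ∫ x, f x ∂Q| ≤ |∫ x, f x ∂P| + |∫ x, f x ∂Q| := abs_sub _ _
    _ ≤ 2 := by linarith

end suphelpers

section net

variable {E : Type*} [MetricSpace E] [CompactSpace E]

lemma stmt12_exists_net {ε : ℝ} (hε : 0 < ε) :
    ∃ t : Finset (E →ᵇ ℝ), ∀ f : E → ℝ, (∀ x, |f x| ≤ 1) → LipschitzWith 1 f →
      ∃ g ∈ t, ∀ x, |f x - g x| ≤ ε := by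
  classical
  set A : Set (E →ᵇ ℝ) := {h | (∀ x, |h x| ≤ 1) ∧ LipschitzWith 1 ⇑h} with hA
  have hclosed : IsClosed A := by
    have hAeq : A = (⋂ x : E, {h : E →ᵇ ℝ | |h x| ≤ 1}) ∩
        (⋂ (x : E) (y : E), {h : E →ᵇ ℝ | dist (h x) (h y) ≤ dist x y}) := by
      ext h
      simp only [hA, Set.mem_setOf_eq, Set.mem_inter_iff, Set.mem_iInter]
      constructor
      · rintro ⟨h1, h2⟩
        exact ⟨h1, fun x y => by simpa using h2.dist_le_mul x y⟩
      · rintro ⟨h1, h2⟩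
        exact ⟨h1, LipschitzWith.of_dist_le_mul fun x y => by simpa using h2 x y⟩
    rw [hAeq]
    refine IsClosed.inter (isClosed_iInter fun x => ?_)
      (isClosed_iInter fun x => isClosed_iInter fun y => ?_)
    · exact isClosed_le ((continuous_eval_const (F := E →ᵇ ℝ) x).abs) continuous_const
    · exact isClosed_le ((continuous_eval_const (F := E →ᵇ ℝ) x).dist
        (continuous_eval_const (F := E →ᵇ ℝ) y)) continuous_const
  have hequi : Equicontinuous ((↑) : A → E → ℝ) := by
    intro x₀
    rw [Metric.equicontinuousAt_iff]
    intro δ hδ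
    refine ⟨δ, hδ, fun x hx i => ?_⟩
    have := i.2.2.dist_le_mul x₀ x
    rw [dist_comm x x₀] at hx
    calc dist (i.1 x₀) (i.1 x) ≤ 1 * dist x₀ x := this
      _ < δ := by rwa [one_mul]
  have hcompact : IsCompact A := by
    refine arzela_ascoli₂ (Set.Icc (-1 : ℝ) 1) isCompact_Icc A hclosed
      (fun f x hf => ?_) hequi
    · exact abs_le.mp (hf.1 x)
  obtain ⟨s, hsfin, hscover⟩ := (Metric.totallyBounded_iff).mp hcompact.totallyBounded ε hε
  refine ⟨hsfin.toFinset, fun f hf1 hf2 => ?_⟩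
  set fb : E →ᵇ ℝ := mkOfCompact ⟨f, hf2.continuous⟩ with hfb
  have hfbA : fb ∈ A := by
    constructor
    · intro x
      exact hf1 x
    · exact hf2
  obtain ⟨g, hgs, hgball⟩ := Set.mem_iUnion₂.mp (hscover hfbA)
  refine ⟨g, hsfin.mem_toFinset.mpr hgs, fun x => ?_⟩
  have hdist : dist fb g < ε := by rwa [Metric.mem_ball] at hgball
  have := dist_coe_le_dist (f := fb) (g := g) x
  have hfx : fb x = f x := rfl
  rw [hfx] at this
  calc |f x - g x| = dist (f x) (g x) := (Real.dist_eq _ _).symm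
    _ ≤ dist fb g := this
    _ ≤ ε := hdist.le

end net
/-- **abstract form of Proposition 3.5.** Let `E` be a compact Polish
space, `S` a Polish space, and `Φ` a weakly continuous injective map from probability
measures on `E` to probability measures on `S`. Then `‖Φ(μₙ) - Φ(νₙ)‖_TV → 0` implies
`‖μₙ - νₙ‖_BL → 0`. -/
theorem stmt12 (E S : Type*)
    [MetricSpace E] [CompactSpace E] [TopologicalSpace.SeparableSpace E]
    [CompleteSpace E] [MeasurableSpace E] [BorelSpace E]
    [MetricSpace S] [TopologicalSpace.SeparableSpace S] [CompleteSpace S]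
    [MeasurableSpace S] [BorelSpace S]
    (Φ : ProbabilityMeasure E → ProbabilityMeasure S)
    (hΦcont : Continuous Φ) (hΦinj : Function.Injective Φ)
    (μ ν : ℕ → ProbabilityMeasure E)
    (htv : Tendsto (fun n =>
        ⨆ f ∈ {f : S → ℝ | Measurable f ∧ ∀ x, |f x| ≤ 1},
          |∫ x, f x ∂(Φ (μ n) : Measure S) - ∫ x, f x ∂(Φ (ν n) : Measure S)|)
      atTop (nhds 0)) :
    Tendsto (fun n =>
        ⨆ f ∈ {f : E → ℝ | (∀ x, |f x| ≤ 1) ∧ LipschitzWith 1 f},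
          |∫ x, f x ∂(μ n : Measure E) - ∫ x, f x ∂(ν n : Measure E)|)
      atTop (nhds 0) := by
  classical
  set SS : Set (S → ℝ) := {f : S → ℝ | Measurable f ∧ ∀ x, |f x| ≤ 1} with hSS
  set SE : Set (E → ℝ) := {f : E → ℝ | (∀ x, |f x| ≤ 1) ∧ LipschitzWith 1 f} with hSE
  set T : ℕ → ℝ := fun n =>
    ⨆ f ∈ SS, |∫ x, f x ∂(Φ (μ n) : Measure S) - ∫ x, f x ∂(Φ (ν n) : Measure S)| with hT
  -- bound for the TV-type suprema
  have hbound2S : ∀ (P Q : ProbabilityMeasure S), ∀ f ∈ SS,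
      |∫ x, f x ∂(P : Measure S) - ∫ x, f x ∂(Q : Measure S)| ≤ 2 := by
    intro P Q f hf
    exact stmt12_integral_diff_le_two _ _ hf.2
  have hbound2E : ∀ (P Q : ProbabilityMeasure E), ∀ f ∈ SE,
      |∫ x, f x ∂(P : Measure E) - ∫ x, f x ∂(Q : Measure E)| ≤ 2 := by
    intro P Q f hf
    exact stmt12_integral_diff_le_two _ _ hf.1
  -- key pointwise comparison with the TV-sup
  have hdiffle : ∀ (n : ℕ) (g : S →ᵇ ℝ),
      |∫ x, g x ∂(Φ (μ n) : Measure S) - ∫ x, g x ∂(Φ (ν n) : Measure S)|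
        ≤ (‖g‖ + 1) * T n := by
    intro n g
    set c : ℝ := ‖g‖ + 1 with hc
    have hcpos : 0 < c := by positivity
    have hmem : (fun x => c⁻¹ * g x) ∈ SS := by
      refine ⟨(g.continuous.measurable).const_mul _, fun x => ?_⟩
      rw [abs_mul, abs_inv, abs_of_pos hcpos]
      have h1 : |g x| ≤ c := by
        have := g.norm_coe_le_norm x
        rw [Real.norm_eq_abs] at this
        linarith
      calc c⁻¹ * |g x| ≤ c⁻¹ * c := by
            exact mul_le_mul_of_nonneg_left h1 (inv_nonneg.mpr hcpos.le)
        _ = 1 := inv_mul_cancel₀ hcpos.ne'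
    have h1 := stmt12_real_le_iSup_mem (c := 2)
      (hbound2S (Φ (μ n)) (Φ (ν n))) hmem
    rw [integral_const_mul, integral_const_mul, ← mul_sub, abs_mul, abs_inv,
      abs_of_pos hcpos] at h1
    calc |∫ x, g x ∂(Φ (μ n) : Measure S) - ∫ x, g x ∂(Φ (ν n) : Measure S)|
        = c * (c⁻¹ * |∫ x, g x ∂(Φ (μ n) : Measure S) - ∫ x, g x ∂(Φ (ν n) : Measure S)|) := by
          rw [← mul_assoc, mul_inv_cancel₀ hcpos.ne', one_mul]
      _ ≤ c * T n := mul_le_mul_of_nonneg_left h1 hcpos.le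
  -- main argument via subsequences
  refine tendsto_of_subseq_tendsto fun ns hns => ?_
  obtain ⟨a, φ₁, hφ₁m, ha⟩ := stmt12_exists_tendsto_subseq (fun n => μ (ns n))
  obtain ⟨b, φ₂, hφ₂m, hb⟩ := stmt12_exists_tendsto_subseq (fun k => ν (ns (φ₁ k)))
  set ms : ℕ → ℕ := φ₁ ∘ φ₂ with hms
  have hmsm : StrictMono ms := hφ₁m.comp hφ₂m
  have hμlim : Tendsto (fun k => μ (ns (ms k))) atTop (𝓝 a) := ha.comp hφ₂m.tendsto_atTop
  have hνlim : Tendsto (fun k => ν (ns (ms k))) atTop (𝓝 b) := hb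
  have hT0 : Tendsto (fun k => T (ns (ms k))) atTop (𝓝 0) :=
    (htv.comp hns).comp hmsm.tendsto_atTop
  -- the difference of integrals vanishes along the subsequence
  have hdiff0 : ∀ g : S →ᵇ ℝ, Tendsto (fun k =>
      ∫ x, g x ∂(Φ (μ (ns (ms k))) : Measure S) - ∫ x, g x ∂(Φ (ν (ns (ms k))) : Measure S))
      atTop (𝓝 0) := by
    intro g
    refine squeeze_zero_norm (a := fun k => (‖g‖ + 1) * T (ns (ms k))) (fun k => ?_) ?_
    · rw [Real.norm_eq_abs]
      exact hdiffle (ns (ms k)) g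
    · have := hT0.const_mul (‖g‖ + 1)
      simpa using this
  -- identify the limits
  have hΦμa : Tendsto (fun k => Φ (μ (ns (ms k)))) atTop (𝓝 (Φ a)) :=
    (hΦcont.tendsto a).comp hμlim
  have hΦνa : Tendsto (fun k => Φ (ν (ns (ms k)))) atTop (𝓝 (Φ a)) := by
    rw [ProbabilityMeasure.tendsto_iff_forall_integral_tendsto]
    intro g
    have h1 := ProbabilityMeasure.tendsto_iff_forall_integral_tendsto.mp hΦμa g
    have h2 := h1.sub (hdiff0 g)
    simpa using h2
  have hΦνb : Tendsto (fun k => Φ (ν (ns (ms k)))) atTop (𝓝 (Φ b)) :=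
    (hΦcont.tendsto b).comp hνlim
  have hba : b = a := hΦinj (tendsto_nhds_unique hΦνb hΦνa)
  rw [hba] at hνlim
  -- conclude: the BL-sup tends to 0 along the subsequence
  refine ⟨ms, ?_⟩
  have hμint : ∀ g : E →ᵇ ℝ, Tendsto (fun k => ∫ x, g x ∂(μ (ns (ms k)) : Measure E))
      atTop (𝓝 (∫ x, g x ∂(a : Measure E))) := fun g =>
    ProbabilityMeasure.tendsto_iff_forall_integral_tendsto.mp hμlim g
  have hνint : ∀ g : E →ᵇ ℝ, Tendsto (fun k => ∫ x, g x ∂(ν (ns (ms k)) : Measure E))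
      atTop (𝓝 (∫ x, g x ∂(a : Measure E))) := fun g =>
    ProbabilityMeasure.tendsto_iff_forall_integral_tendsto.mp hνlim g
  rw [NormedAddCommGroup.tendsto_nhds_zero]
  intro ε hε
  obtain ⟨t, hnet⟩ := stmt12_exists_net (E := E) (show (0:ℝ) < ε/4 by linarith)
  set R : ℕ → ℝ := fun k => ∑ g ∈ t,
    |∫ x, g x ∂(μ (ns (ms k)) : Measure E) - ∫ x, g x ∂(ν (ns (ms k)) : Measure E)| with hR
  have hRlim : Tendsto R atTop (𝓝 0) := by
    have hterm : ∀ g ∈ t, Tendsto (fun k =>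
        |∫ x, g x ∂(μ (ns (ms k)) : Measure E) - ∫ x, g x ∂(ν (ns (ms k)) : Measure E)|)
        atTop (𝓝 0) := by
      intro g _
      have h := (hμint g).sub (hνint g)
      rw [sub_self] at h
      simpa using h.abs
    have := tendsto_finset_sum t hterm
    simpa using this
  have hev : ∀ᶠ k in atTop, R k < ε/4 := (tendsto_order.1 hRlim).2 _ (by linarith)
  filter_upwards [hev] with k hk
  have hRnonneg : 0 ≤ R k := Finset.sum_nonneg fun g _ => abs_nonneg _
  set P : Measure E := (μ (ns (ms k)) : Measure E) with hP
  set Q : Measure E := (ν (ns (ms k)) : Measure E) with hQ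
  have hDle : (⨆ f ∈ SE, |∫ x, f x ∂P - ∫ x, f x ∂Q|) ≤ ε/2 + R k := by
    refine stmt12_real_iSup_mem_le (by linarith) ?_
    intro f hf
    obtain ⟨g, hgt, hg⟩ := hnet f hf.1 hf.2
    set fb : E →ᵇ ℝ := mkOfCompact ⟨f, hf.2.continuous⟩ with hfb
    have hfbcoe : ∀ x, fb x = f x := fun _ => rfl
    have hint1P : Integrable f P := by
      have := fb.integrable P
      exact this
    have hint1Q : Integrable f Q := by
      have := fb.integrable Q
      exact this
    have hint2P : Integrable (⇑g) P := g.integrable P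
    have hint2Q : Integrable (⇑g) Q := g.integrable Q
    have e1 : |∫ x, f x ∂P - ∫ x, g x ∂P| ≤ ε/4 := by
      rw [← integral_sub hint1P hint2P]
      have := norm_integral_le_of_norm_le_const (μ := P) (C := ε/4)
        (f := fun x => f x - g x)
        (Eventually.of_forall fun x => by rw [Real.norm_eq_abs]; exact hg x)
      simpa [measure_univ, Real.norm_eq_abs] using this
    have e2 : |∫ x, f x ∂Q - ∫ x, g x ∂Q| ≤ ε/4 := by
      rw [← integral_sub hint1Q hint2Q]
      have := norm_integral_le_of_norm_le_const (μ := Q) (C := ε/4)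
        (f := fun x => f x - g x)
        (Eventually.of_forall fun x => by rw [Real.norm_eq_abs]; exact hg x)
      simpa [measure_univ, Real.norm_eq_abs] using this
    have e3 : |∫ x, g x ∂P - ∫ x, g x ∂Q| ≤ R k := by
      refine Finset.single_le_sum (f := fun g : E →ᵇ ℝ =>
        |∫ x, g x ∂(μ (ns (ms k)) : Measure E) - ∫ x, g x ∂(ν (ns (ms k)) : Measure E)|)
        (fun g _ => abs_nonneg _) hgt
    calc |∫ x, f x ∂P - ∫ x, f x ∂Q|
        ≤ |∫ x, f x ∂P - ∫ x, g x ∂P| + |∫ x, g x ∂P - ∫ x, f x ∂Q| :=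
          abs_sub_le _ _ _
      _ ≤ |∫ x, f x ∂P - ∫ x, g x ∂P| + (|∫ x, g x ∂P - ∫ x, g x ∂Q|
            + |∫ x, g x ∂Q - ∫ x, f x ∂Q|) := by
          have := abs_sub_le (∫ x, g x ∂P) (∫ x, g x ∂Q) (∫ x, f x ∂Q)
          linarith
      _ ≤ ε/4 + (R k + ε/4) := by
          have e2' : |∫ x, g x ∂Q - ∫ x, f x ∂Q| ≤ ε/4 := by
            rw [abs_sub_comm]; exact e2
          exact add_le_add e1 (add_le_add e3 e2')
      _ = ε/2 + R k := by ring
  have hD0 : 0 ≤ ⨆ f ∈ SE, |∫ x, f x ∂P - ∫ x, f x ∂Q| := by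
    have h0mem : (fun _ : E => (0:ℝ)) ∈ SE := by
      constructor
      · intro x; simp
      · simpa using (LipschitzWith.const (b := (0:ℝ))).weaken zero_le_one
    have := stmt12_real_le_iSup_mem (c := 2) (fun f hf =>
      stmt12_integral_diff_le_two P Q hf.1) h0mem
    simpa using this
  rw [Real.norm_eq_abs, abs_of_nonneg hD0]
  calc (⨆ f ∈ SE, |∫ x, f x ∂P - ∫ x, f x ∂Q|) ≤ ε/2 + R k := hDle
    _ < ε/2 + ε/4 := by linarith
    _ < ε := by linarith
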